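/- Let α₀ > 0 be irrational. If the irrationality base satisfies θ(α₀) > Δ(α₀) (as extended reals), then Δ is not differentiable at α₀. -/

import Mathlib

open Filter
open scoped ENNReal
open Topology

/-- The digit sequence `u_α`: with `b = ⌈α⌉`, `u_α n = (b−1) + ⌈(α−b+1)(n+1)⌉ − ⌈(α−b+1)n⌉`,
the upper mechanical word of slope `α − b + 1` written over the alphabet `{b−1, b}`. -/
noncomputable def upperWord (α : ℝ) (n : ℕ) : ℤ :=
  (⌈α⌉ - 1) + (⌈(α - ⌈α⌉ + 1) * ((n : ℝ) + 1)⌉ - ⌈(α - ⌈α⌉ + 1) * (n : ℝ)⌉)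

/-- `Δ` is the devil's staircase function: `Δ 0 = 1` and, for each `α > 0`, `Δ α` is the
unique real `β > 1` satisfying `∑_{n=0}^∞ u_α(n)·β^{−(n+1)} = 1`. -/
def IsDevilStaircase (Δ : ℝ → ℝ) : Prop :=
  Δ 0 = 1 ∧ ∀ α : ℝ, 0 < α →
    (1 < Δ α ∧ ∑' n : ℕ, (upperWord α n : ℝ) / (Δ α) ^ (n + 1) = 1) ∧
    ∀ β : ℝ, 1 < β → (∑' n : ℕ, (upperWord α n : ℝ) / β ^ (n + 1) = 1) → β = Δ α

/-- `‖x‖`: the distance from `x` to the nearest integer. -/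
noncomputable def distNearestInt (x : ℝ) : ℝ := |x - round x|

/-- The irrationality base `θ(α) = sup {λ ≥ 1 : liminf_q λ^q‖qα‖/q = 0}`,
the supremum taken in the extended reals `[1, ∞]`. -/
noncomputable def irrationalityBase (α : ℝ) : ℝ≥0∞ :=
  sSup (ENNReal.ofReal ''
    {l : ℝ | 1 ≤ l ∧
      liminf (fun q : ℕ => ((l ^ q * distNearestInt (q * α) / q : ℝ) : EReal)) atTop = 0})

lemma slope_pos (α : ℝ) : 0 < α - ⌈α⌉ + 1 := by
  have := Int.ceil_lt_add_one α; linarith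

lemma slope_le_one (α : ℝ) : α - ⌈α⌉ + 1 ≤ 1 := by
  have := Int.le_ceil α; linarith

lemma word_nonneg (α : ℝ) (hα : 0 < α) (n : ℕ) : 0 ≤ upperWord α n := by
  have hb : (1:ℤ) ≤ ⌈α⌉ := by exact_mod_cast Int.ceil_pos.mpr hα
  have hm : ⌈(α - ⌈α⌉ + 1) * (n : ℝ)⌉ ≤ ⌈(α - ⌈α⌉ + 1) * ((n:ℝ) + 1)⌉ := by
    apply Int.ceil_le_ceil
    nlinarith [slope_pos α]
  unfold upperWord; omega

lemma word_le (α : ℝ) (n : ℕ) : upperWord α n ≤ ⌈α⌉ := by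
  have h : ⌈(α - ⌈α⌉ + 1) * ((n:ℝ) + 1)⌉ ≤ ⌈(α - ⌈α⌉ + 1) * (n : ℝ)⌉ + 1 := by
    have : (α - ⌈α⌉ + 1) * ((n:ℝ) + 1) = (α - ⌈α⌉ + 1) * (n : ℝ) + (α - ⌈α⌉ + 1) := by ring
    rw [this]
    calc ⌈(α - ⌈α⌉ + 1) * (n : ℝ) + (α - ⌈α⌉ + 1)⌉ ≤ ⌈(α - ⌈α⌉ + 1) * (n : ℝ)⌉ + ⌈(α - ⌈α⌉ + 1)⌉ :=
          Int.ceil_add_le _ _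
      _ ≤ ⌈(α - ⌈α⌉ + 1) * (n : ℝ)⌉ + 1 := by
          have : ⌈(α - ⌈α⌉ + 1)⌉ ≤ 1 := Int.ceil_le.mpr (by exact_mod_cast slope_le_one α)
          omega
  unfold upperWord; omega

lemma word_sum (α : ℝ) (N : ℕ) :
    ∑ k ∈ Finset.range N, upperWord α k = (⌈α⌉ - 1) * N + ⌈(α - ⌈α⌉ + 1) * (N : ℝ)⌉ := by
  induction N with
  | zero => simp
  | succ n ih =>
    rw [Finset.sum_range_succ, ih]
    unfold upperWord
    push_cast
    ring_nf

lemma word_zero (α : ℝ) : upperWord α 0 = ⌈α⌉ := by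
  have h1 : ⌈(α - ⌈α⌉ + 1) * ((0:ℕ) + 1 : ℝ)⌉ = 1 := by
    have : ((0:ℕ) + 1 : ℝ) = 1 := by norm_num
    rw [this, mul_one, Int.ceil_eq_iff]
    refine ⟨by push_cast; linarith [slope_pos α], by push_cast; linarith [slope_le_one α]⟩
  have h2 : ⌈(α - ⌈α⌉ + 1) * ((0:ℕ) : ℝ)⌉ = 0 := by norm_num
  unfold upperWord; rw [h1, h2]; ring

-- geometric
lemma tsum_geom (x : ℝ) (h0 : 0 ≤ x) (h1 : x < 1) : ∑' n : ℕ, x ^ (n + 1) = x / (1 - x) := by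
  have : ∑' n : ℕ, x ^ (n + 1) = ∑' n : ℕ, x * x ^ n := by
    congr 1; ext n; ring
  rw [this, tsum_mul_left, tsum_geometric_of_lt_one h0 h1]
  field_simp

lemma summable_bd (w : ℕ → ℝ) (C : ℝ) (hw : ∀ n, |w n| ≤ C) (x : ℝ) (h0 : 0 ≤ x) (h1 : x < 1) :
    Summable (fun n => w n * x ^ (n + 1)) := by
  apply Summable.of_norm_bounded (g := fun n => (C * x) * x ^ n)
  · exact (summable_geometric_of_lt_one h0 h1).mul_left _
  · intro n
    have hx : |x| = x := abs_of_nonneg h0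
    have : ‖w n * x ^ (n+1)‖ = |w n| * x ^ (n+1) := by
      rw [norm_mul, Real.norm_eq_abs, Real.norm_eq_abs, abs_pow, hx]
    rw [this, pow_succ]
    have h2 : 0 ≤ x ^ n := pow_nonneg h0 n
    calc |w n| * x ^ (n+1) ≤ C * x ^ (n+1) :=
          mul_le_mul_of_nonneg_right (hw n) (pow_nonneg h0 _)
      _ = C * x * x ^ n := by ring

lemma summable_lin (C x : ℝ) (h0 : 0 ≤ x) (h1 : x < 1) :
    Summable (fun n : ℕ => C * (n + 1) * x ^ (n + 1)) := by
  have h : Summable (fun n : ℕ => (n : ℝ) ^ 1 * x ^ n) :=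
    summable_pow_mul_geometric_of_norm_lt_one 1 (by rwa [Real.norm_eq_abs, abs_of_nonneg h0])
  have := ((summable_nat_add_iff 1).mpr h).mul_left C
  apply this.congr
  intro n
  push_cast
  ring

lemma abel_tsum (D : ℕ → ℝ) (C : ℝ) (hD : ∀ n, |D n| ≤ C) (x : ℝ) (h0 : 0 ≤ x) (h1 : x < 1) :
    (Summable fun n => (∑ k ∈ Finset.range (n + 1), D k) * x ^ (n + 1)) ∧
    ∑' n : ℕ, D n * x ^ (n + 1) =
      (1 - x) * ∑' n : ℕ, (∑ k ∈ Finset.range (n + 1), D k) * x ^ (n + 1) := by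
  set S : ℕ → ℝ := fun n => ∑ k ∈ Finset.range (n + 1), D k with hS
  have hSbd : ∀ n, |S n| ≤ C * (n + 1) := by
    intro n
    calc |S n| ≤ ∑ k ∈ Finset.range (n + 1), |D k| := Finset.abs_sum_le_sum_abs _ _
      _ ≤ ∑ _k ∈ Finset.range (n + 1), C := Finset.sum_le_sum (fun k _ => hD k)
      _ = C * (n + 1) := by rw [Finset.sum_const, Finset.card_range]; push_cast; ring
  have hf : Summable (fun n => S n * x ^ (n + 1)) := by
    apply Summable.of_norm_bounded (summable_lin C x h0 h1)
    intro n
    rw [Real.norm_eq_abs, abs_mul, abs_pow, abs_of_nonneg h0]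
    exact mul_le_mul_of_nonneg_right (hSbd n) (pow_nonneg h0 _)
  refine ⟨hf, ?_⟩
  set h : ℕ → ℝ := fun n => Nat.rec 0 (fun m _ => S m * x ^ (m + 2)) n with hh
  have hh0 : h 0 = 0 := rfl
  have hhs : ∀ n, h (n + 1) = S n * x ^ (n + 2) := fun n => rfl
  have hg : Summable (fun n => S n * x ^ (n + 2)) := by
    have := hf.mul_left x
    apply this.congr; intro n; ring
  have hhsum : Summable h := by
    rw [← summable_nat_add_iff 1]
    simpa [hhs] using hg
  have hid : ∀ n, D n * x ^ (n + 1) = S n * x ^ (n + 1) - h n := by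
    intro n
    cases n with
    | zero => simp [hh0, hS, Finset.sum_range_one]
    | succ m =>
      rw [hhs]
      have : S (m + 1) - S m = D (m + 1) := by
        simp [hS, Finset.sum_range_succ]
      have e : S (m+1) * x ^ (m+2) - S m * x ^ (m+2) = (S (m+1) - S m) * x ^ (m+2) := by ring
      rw [show m + 1 + 1 = m + 2 from rfl, e, this]
  calc ∑' n : ℕ, D n * x ^ (n + 1) = ∑' n : ℕ, (S n * x ^ (n + 1) - h n) := by
        exact tsum_congr hid
    _ = (∑' n, S n * x ^ (n + 1)) - ∑' n, h n := Summable.tsum_sub hf hhsum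
    _ = (∑' n, S n * x ^ (n + 1)) - x * ∑' n, S n * x ^ (n + 1) := by
        congr 1
        rw [Summable.tsum_eq_zero_add hhsum, hh0, zero_add]
        rw [← tsum_mul_left]
        exact tsum_congr fun n => by rw [hhs]; ring
    _ = (1 - x) * ∑' n, S n * x ^ (n + 1) := by ring

lemma tsum_F_eq (w : ℕ → ℤ) (β : ℝ) (hβ : 0 < β) :
    ∑' n : ℕ, (w n : ℝ) / β ^ (n + 1) = ∑' n : ℕ, (w n : ℝ) * (1 / β) ^ (n + 1) :=
  tsum_congr fun n => by rw [one_div, inv_pow, div_eq_mul_inv]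

lemma core (Δ : ℝ → ℝ) (hΔ : IsDevilStaircase Δ) (u v : ℝ) (hu : 0 < u) (huv : u ≤ v)
    (hc : ⌈u⌉ = ⌈v⌉) :
    ∃ T : ℝ, 0 ≤ T ∧
      (∀ q : ℕ, 1 ≤ q → ∀ m : ℤ, u * q < m → (m : ℝ) < v * q → (1 / Δ u) ^ q ≤ T) ∧
      ∑' n : ℕ, (upperWord v n : ℝ) * (1 / Δ u) ^ (n + 1) = 1 + (1 - 1 / Δ u) * T := by
  obtain ⟨⟨hβu1, hFu⟩, _⟩ := (hΔ.2 u hu)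
  have hv : 0 < v := lt_of_lt_of_le hu huv
  set βu := Δ u with hβu
  set x := 1 / βu with hx
  have hβu0 : 0 < βu := by linarith
  have hx0 : 0 ≤ x := by positivity
  have hx1 : x < 1 := by rw [hx]; rw [div_lt_one hβu0]; linarith
  have hB : (1:ℝ) ≤ (⌈u⌉ : ℝ) := by exact_mod_cast Int.ceil_pos.mpr hu
  set D : ℕ → ℝ := fun n => (upperWord v n : ℝ) - (upperWord u n : ℝ) with hD
  have hDbd : ∀ n, |D n| ≤ (⌈u⌉ : ℝ) := by
    intro n
    have h1 : (0:ℝ) ≤ (upperWord v n : ℝ) := by exact_mod_cast word_nonneg v hv n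
    have h2 : (upperWord v n : ℝ) ≤ (⌈v⌉ : ℝ) := by exact_mod_cast word_le v n
    have h3 : (0:ℝ) ≤ (upperWord u n : ℝ) := by exact_mod_cast word_nonneg u hu n
    have h4 : (upperWord u n : ℝ) ≤ (⌈u⌉ : ℝ) := by exact_mod_cast word_le u n
    rw [hc] at h4
    simp only [hD]
    rw [abs_le, hc]
    constructor <;> linarith
  obtain ⟨hfS, habel⟩ := abel_tsum D (⌈u⌉ : ℝ) hDbd x hx0 hx1
  set T : ℝ := ∑' n : ℕ, (∑ k ∈ Finset.range (n + 1), D k) * x ^ (n + 1) with hT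
  have hSformula : ∀ n : ℕ, ∑ k ∈ Finset.range (n + 1), D k =
      ((⌈(v - ⌈v⌉ + 1) * ((n+1 : ℕ) : ℝ)⌉ - ⌈(u - ⌈u⌉ + 1) * ((n+1 : ℕ) : ℝ)⌉ : ℤ) : ℝ) := by
    intro n
    have e1 := word_sum v (n+1)
    have e2 := word_sum u (n+1)
    have : ∑ k ∈ Finset.range (n + 1), D k =
        ((∑ k ∈ Finset.range (n+1), upperWord v k : ℤ) : ℝ)
        - ((∑ k ∈ Finset.range (n+1), upperWord u k : ℤ) : ℝ) := by
      rw [hD]; push_cast [Finset.sum_sub_distrib]; ring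
    rw [this, e1, e2, hc]
    push_cast
    ring
  have hSnonneg : ∀ n : ℕ, 0 ≤ ∑ k ∈ Finset.range (n + 1), D k := by
    intro n
    rw [hSformula n]
    have : ⌈(u - ⌈u⌉ + 1) * ((n+1 : ℕ) : ℝ)⌉ ≤ ⌈(v - ⌈v⌉ + 1) * ((n+1 : ℕ) : ℝ)⌉ := by
      apply Int.ceil_le_ceil
      have : u - ⌈u⌉ ≤ v - ⌈v⌉ := by rw [← hc]; linarith
      have hn : (0:ℝ) ≤ ((n+1 : ℕ) : ℝ) := by positivity
      nlinarith
    have : (0:ℤ) ≤ ⌈(v - ⌈v⌉ + 1) * ((n+1 : ℕ) : ℝ)⌉ - ⌈(u - ⌈u⌉ + 1) * ((n+1 : ℕ) : ℝ)⌉ := by omega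
    exact_mod_cast this
  have hTnonneg : 0 ≤ T := tsum_nonneg fun n => mul_nonneg (hSnonneg n) (pow_nonneg hx0 _)
  refine ⟨T, hTnonneg, ?_, ?_⟩
  · intro q hq m hm1 hm2
    -- S_{q-1} ≥ 1
    have hSq : (1:ℝ) ≤ ∑ k ∈ Finset.range ((q-1) + 1), D k := by
      rw [hSformula (q-1)]
      have hqe : ((q - 1 + 1 : ℕ) : ℝ) = (q : ℝ) := by
        have : q - 1 + 1 = q := Nat.succ_pred_eq_of_pos hq
        rw [this]
      rw [hqe]
      have h1 : ⌈(u - ⌈u⌉ + 1) * (q : ℝ)⌉ ≤ m - ⌈u⌉ * q + q := by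
        apply Int.ceil_le.mpr
        push_cast
        nlinarith [(by exact_mod_cast hq : (1:ℝ) ≤ (q:ℝ))]
      have h2 : m - ⌈u⌉ * q + q < ⌈(v - ⌈v⌉ + 1) * (q : ℝ)⌉ := by
        rw [Int.lt_ceil, ← hc]
        push_cast
        nlinarith [(by exact_mod_cast hq : (1:ℝ) ≤ (q:ℝ))]
      have : (1:ℤ) ≤ ⌈(v - ⌈v⌉ + 1) * (q : ℝ)⌉ - ⌈(u - ⌈u⌉ + 1) * (q : ℝ)⌉ := by omega
      exact_mod_cast this
    have hterm : x ^ q ≤ (∑ k ∈ Finset.range ((q-1) + 1), D k) * x ^ ((q-1) + 1) := by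
      have hqe : (q - 1) + 1 = q := Nat.succ_pred_eq_of_pos hq
      have hSq' : (1:ℝ) ≤ ∑ k ∈ Finset.range q, D k := by rwa [hqe] at hSq
      rw [hqe]
      nlinarith [pow_nonneg hx0 q]
    calc x ^ q ≤ (∑ k ∈ Finset.range ((q-1) + 1), D k) * x ^ ((q-1) + 1) := hterm
      _ ≤ T := Summable.le_tsum hfS (q-1) fun j _ => mul_nonneg (hSnonneg j) (pow_nonneg hx0 _)
  · have hFu' : ∑' n : ℕ, (upperWord u n : ℝ) * x ^ (n + 1) = 1 := by
      rw [hx, ← tsum_F_eq _ _ hβu0]; exact hFu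
    have hsumu : Summable (fun n => (upperWord u n : ℝ) * x ^ (n + 1)) :=
      summable_bd _ (⌈u⌉ : ℝ) (fun n => by
        rw [abs_le]
        constructor
        · have := word_nonneg u hu n; have : (0:ℝ) ≤ (upperWord u n : ℝ) := by exact_mod_cast this
          linarith
        · exact_mod_cast word_le u n) x hx0 hx1
    have hsumD : Summable (fun n => D n * x ^ (n + 1)) :=
      summable_bd D (⌈u⌉ : ℝ) hDbd x hx0 hx1
    have hsplit : ∀ n : ℕ, (upperWord v n : ℝ) * x ^ (n + 1)
        = D n * x ^ (n + 1) + (upperWord u n : ℝ) * x ^ (n + 1) := by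
      intro n; rw [hD]; ring
    calc ∑' n : ℕ, (upperWord v n : ℝ) * x ^ (n + 1)
        = ∑' n : ℕ, (D n * x ^ (n + 1) + (upperWord u n : ℝ) * x ^ (n + 1)) := tsum_congr hsplit
      _ = (∑' n : ℕ, D n * x ^ (n + 1)) + ∑' n : ℕ, (upperWord u n : ℝ) * x ^ (n + 1) :=
          Summable.tsum_add hsumD hsumu
      _ = (1 - x) * T + 1 := by rw [habel, hFu', hT]
      _ = 1 + (1 - x) * T := by ring

lemma keyB (Δ : ℝ → ℝ) (hΔ : IsDevilStaircase Δ) (u v : ℝ) (hu : 0 < u) (huv : u ≤ v)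
    (hc : ⌈u⌉ = ⌈v⌉) : Δ u ≤ Δ v := by
  obtain ⟨⟨hβu1, _⟩, _⟩ := hΔ.2 u hu
  have hv : 0 < v := lt_of_lt_of_le hu huv
  obtain ⟨⟨hβv1, hFv⟩, _⟩ := hΔ.2 v hv
  by_contra hcon
  push_neg at hcon
  obtain ⟨T, hT0, _, hF⟩ := core Δ hΔ u v hu huv hc
  have hβu0 : (0:ℝ) < Δ u := by linarith
  have hβv0 : (0:ℝ) < Δ v := by linarith
  set xu := 1 / Δ u with hxu
  set xv := 1 / Δ v with hxv
  have hxu0 : 0 < xu := by positivity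
  have hxv0 : 0 < xv := by positivity
  have hxu1 : xu < 1 := by rw [hxu, div_lt_one hβu0]; linarith
  have hxv1 : xv < 1 := by rw [hxv, div_lt_one hβv0]; linarith
  have hxlt : xu < xv := by
    rw [hxu, hxv]
    exact one_div_lt_one_div_of_lt hβv0 hcon
  have hwv_bd : ∀ n, |(upperWord v n : ℝ)| ≤ (⌈v⌉ : ℝ) := by
    intro n
    rw [abs_le]
    constructor
    · have := word_nonneg v hv n
      have h2 : (0:ℝ) ≤ (upperWord v n : ℝ) := by exact_mod_cast this
      have h3 : (0:ℝ) ≤ (⌈v⌉:ℝ) := by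
        have : (0:ℤ) ≤ ⌈v⌉ := le_of_lt (Int.ceil_pos.mpr hv)
        exact_mod_cast this
      linarith
    · exact_mod_cast word_le v n
  have hsu : Summable (fun n => (upperWord v n : ℝ) * xu ^ (n + 1)) :=
    summable_bd _ _ hwv_bd xu hxu0.le hxu1
  have hsv : Summable (fun n => (upperWord v n : ℝ) * xv ^ (n + 1)) :=
    summable_bd _ _ hwv_bd xv hxv0.le hxv1
  have h1 : 1 ≤ ∑' n : ℕ, (upperWord v n : ℝ) * xu ^ (n + 1) := by
    rw [hF]
    nlinarith
  have hlt : ∑' n : ℕ, (upperWord v n : ℝ) * xu ^ (n + 1)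
      < ∑' n : ℕ, (upperWord v n : ℝ) * xv ^ (n + 1) := by
    apply Summable.tsum_lt_tsum (i := 0) _ _ hsu hsv
    · intro n
      apply mul_le_mul_of_nonneg_left (pow_le_pow_left₀ hxu0.le hxlt.le _)
      exact_mod_cast word_nonneg v hv n
    · have hw0 : (1:ℝ) ≤ (upperWord v 0 : ℝ) := by
        rw [word_zero]
        exact_mod_cast Int.ceil_pos.mpr hv
      have : xu ^ (0+1) < xv ^ (0+1) := by simpa using hxlt
      nlinarith
  have hFv' : ∑' n : ℕ, (upperWord v n : ℝ) * xv ^ (n + 1) = 1 := by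
    rw [hxv, ← tsum_F_eq _ _ hβv0]; exact hFv
  rw [hFv'] at hlt
  linarith

lemma keyA (Δ : ℝ → ℝ) (hΔ : IsDevilStaircase Δ) (u v : ℝ) (hu : 0 < u) (huv : u < v)
    (hc : ⌈u⌉ = ⌈v⌉) (q : ℕ) (hq : 1 ≤ q) (m : ℤ) (hm1 : u * q < m) (hm2 : (m : ℝ) < v * q) :
    Δ u < Δ v ∧
      (1 - 1 / Δ u) * (1 / Δ u) ^ q * ((Δ u - 1) * (Δ v - 1) / (⌈u⌉ : ℝ)) ≤ Δ v - Δ u := by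
  obtain ⟨⟨hβu1, _⟩, _⟩ := hΔ.2 u hu
  have hv : 0 < v := lt_trans hu huv
  obtain ⟨⟨hβv1, hFv⟩, _⟩ := hΔ.2 v hv
  obtain ⟨T, hT0, hTq, hF⟩ := core Δ hΔ u v hu huv.le hc
  have hβu0 : (0:ℝ) < Δ u := by linarith
  have hβv0 : (0:ℝ) < Δ v := by linarith
  set xu := 1 / Δ u with hxu
  set xv := 1 / Δ v with hxv
  have hxu0 : 0 < xu := by positivity
  have hxv0 : 0 < xv := by positivity
  have hxu1 : xu < 1 := by rw [hxu, div_lt_one hβu0]; linarith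
  have hxv1 : xv < 1 := by rw [hxv, div_lt_one hβv0]; linarith
  have hB1 : (1:ℝ) ≤ (⌈u⌉ : ℝ) := by exact_mod_cast Int.ceil_pos.mpr hu
  have hB0 : (0:ℝ) < (⌈u⌉ : ℝ) := by linarith
  have hTq' : xu ^ q ≤ T := hTq q hq m hm1 hm2
  have hpow : 0 < xu ^ q := pow_pos hxu0 q
  have hge : 1 + (1 - xu) * xu ^ q ≤ ∑' n : ℕ, (upperWord v n : ℝ) * xu ^ (n + 1) := by
    rw [hF]
    nlinarith
  have hwv_bd : ∀ n, |(upperWord v n : ℝ)| ≤ (⌈v⌉ : ℝ) := by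
    intro n
    rw [abs_le]
    refine ⟨?_, by exact_mod_cast word_le v n⟩
    have h2 : (0:ℝ) ≤ (upperWord v n : ℝ) := by exact_mod_cast word_nonneg v hv n
    have h3 : (0:ℝ) ≤ (⌈v⌉:ℝ) := by rw [← hc]; linarith
    linarith
  have hsu : Summable (fun n => (upperWord v n : ℝ) * xu ^ (n + 1)) :=
    summable_bd _ _ hwv_bd xu hxu0.le hxu1
  have hsv : Summable (fun n => (upperWord v n : ℝ) * xv ^ (n + 1)) :=
    summable_bd _ _ hwv_bd xv hxv0.le hxv1
  have hFv' : ∑' n : ℕ, (upperWord v n : ℝ) * xv ^ (n + 1) = 1 := by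
    rw [hxv, ← tsum_F_eq _ _ hβv0]; exact hFv
  -- first: Δ u < Δ v
  have hmain : Δ u < Δ v := by
    by_contra hcon
    push_neg at hcon  -- Δ v ≤ Δ u
    have hxle : xu ≤ xv := by
      rw [hxu, hxv]
      exact one_div_le_one_div_of_le hβv0 hcon
    have : ∑' n : ℕ, (upperWord v n : ℝ) * xu ^ (n + 1)
        ≤ ∑' n : ℕ, (upperWord v n : ℝ) * xv ^ (n + 1) := by
      apply Summable.tsum_le_tsum _ hsu hsv
      intro n
      apply mul_le_mul_of_nonneg_left (pow_le_pow_left₀ hxu0.le hxle _)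
      exact_mod_cast word_nonneg v hv n
    rw [hFv'] at this
    nlinarith
  refine ⟨hmain, ?_⟩
  have hxgt : xv < xu := by
    rw [hxu, hxv]
    exact one_div_lt_one_div_of_lt hβu0 hmain
  -- upper bound on F_v(xu) - F_v(xv)
  have hgeo_u : Summable (fun n : ℕ => xu ^ (n + 1)) := by
    have := summable_geometric_of_lt_one hxu0.le hxu1
    have h2 := this.mul_left xu
    apply h2.congr
    intro n; rw [pow_succ]; ring
  have hgeo_v : Summable (fun n : ℕ => xv ^ (n + 1)) := by
    have := summable_geometric_of_lt_one hxv0.le hxv1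
    have h2 := this.mul_left xv
    apply h2.congr
    intro n; rw [pow_succ]; ring
  have hdiff : ∑' n : ℕ, (upperWord v n : ℝ) * xu ^ (n + 1)
      - ∑' n : ℕ, (upperWord v n : ℝ) * xv ^ (n + 1)
      ≤ (⌈u⌉ : ℝ) * (xu / (1 - xu)) - (⌈u⌉ : ℝ) * (xv / (1 - xv)) := by
    rw [← Summable.tsum_sub hsu hsv, ← tsum_geom xu hxu0.le hxu1, ← tsum_geom xv hxv0.le hxv1,
      ← tsum_mul_left, ← tsum_mul_left, ← Summable.tsum_sub (hgeo_u.mul_left _) (hgeo_v.mul_left _)]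
    apply Summable.tsum_le_tsum _ (hsu.sub hsv) ((hgeo_u.mul_left _).sub (hgeo_v.mul_left _))
    intro n
    have hbr : 0 ≤ xu ^ (n+1) - xv ^ (n+1) := by
      have := pow_le_pow_left₀ hxv0.le hxgt.le (n+1)
      linarith
    have hwle : (upperWord v n : ℝ) ≤ (⌈u⌉ : ℝ) := by rw [hc]; exact_mod_cast word_le v n
    nlinarith [word_nonneg v hv n, (by exact_mod_cast word_nonneg v hv n : (0:ℝ) ≤ (upperWord v n : ℝ))]
  have hgu : xu / (1 - xu) = 1 / (Δ u - 1) := by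
    rw [hxu]; field_simp
  have hgv : xv / (1 - xv) = 1 / (Δ v - 1) := by
    rw [hxv]; field_simp
  rw [hFv'] at hdiff
  rw [hgu, hgv] at hdiff
  -- (1 - xu) * xu^q ≤ B * (1/(Δu -1) - 1/(Δv -1))
  have hd1 : (0:ℝ) < Δ u - 1 := by linarith
  have hd2 : (0:ℝ) < Δ v - 1 := by linarith
  have hkey : (1 - xu) * xu ^ q ≤ (⌈u⌉ : ℝ) * ((Δ v - Δ u) / ((Δ u - 1) * (Δ v - 1))) := by
    have he : (1:ℝ) / (Δ u - 1) - 1 / (Δ v - 1) = (Δ v - Δ u) / ((Δ u - 1) * (Δ v - 1)) := by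
      rw [div_sub_div _ _ hd1.ne' hd2.ne']
      congr 1
      ring
    calc (1 - xu) * xu ^ q
        ≤ (⌈u⌉ : ℝ) * (1 / (Δ u - 1)) - (⌈u⌉ : ℝ) * (1 / (Δ v - 1)) := by linarith
      _ = (⌈u⌉ : ℝ) * ((1:ℝ) / (Δ u - 1) - 1 / (Δ v - 1)) := by ring
      _ = (⌈u⌉ : ℝ) * ((Δ v - Δ u) / ((Δ u - 1) * (Δ v - 1))) := by rw [he]
  have hstep : (1 - xu) * xu ^ q * ((Δ u - 1) * (Δ v - 1)) ≤ (⌈u⌉ : ℝ) * (Δ v - Δ u) := by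
    have h2 := mul_le_mul_of_nonneg_right hkey (le_of_lt (mul_pos hd1 hd2))
    calc (1 - xu) * xu ^ q * ((Δ u - 1) * (Δ v - 1))
        ≤ (⌈u⌉ : ℝ) * ((Δ v - Δ u) / ((Δ u - 1) * (Δ v - 1))) * ((Δ u - 1) * (Δ v - 1)) := h2
      _ = (⌈u⌉ : ℝ) * (Δ v - Δ u) := by field_simp
  calc (1 - 1/Δ u) * (1/Δ u) ^ q * ((Δ u - 1) * (Δ v - 1) / (⌈u⌉:ℝ))
      = (1 - xu) * xu ^ q * ((Δ u - 1) * (Δ v - 1)) / (⌈u⌉:ℝ) := by rw [hxu]; ring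
    _ ≤ (⌈u⌉ : ℝ) * (Δ v - Δ u) / (⌈u⌉:ℝ) := by
        exact div_le_div_of_nonneg_right hstep hB0.le
    _ = Δ v - Δ u := by field_simp

set_option maxHeartbeats 1000000 in
/-- If `α₀ > 0` is irrational and `θ(α₀) > Δ(α₀)`, then `Δ` is not differentiable at `α₀`. -/
theorem devilStaircase_not_differentiable (Δ : ℝ → ℝ) (hΔ : IsDevilStaircase Δ)
    (α₀ : ℝ) (h0 : 0 < α₀) (hirr : Irrational α₀)
    (hθ : ENNReal.ofReal (Δ α₀) < irrationalityBase α₀) :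
    ¬ DifferentiableAt ℝ Δ α₀ := by
  intro hdiff
  -- basic setup
  have hb1 : (1:ℤ) ≤ ⌈α₀⌉ := Int.ceil_pos.mpr h0
  have hb1R : (1:ℝ) ≤ (⌈α₀⌉ : ℝ) := by exact_mod_cast hb1
  have hαlt : α₀ < (⌈α₀⌉ : ℝ) := lt_of_le_of_ne (Int.le_ceil α₀) (hirr.ne_int ⌈α₀⌉)
  have hαgt : (⌈α₀⌉ : ℝ) - 1 < α₀ := by have := Int.ceil_lt_add_one α₀; linarith
  set x₁ : ℝ := ((⌈α₀⌉ : ℝ) - 1 + α₀) / 2 with hx₁def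
  have hx₁pos : 0 < x₁ := by rw [hx₁def]; linarith
  have hx₁lt : x₁ < α₀ := by rw [hx₁def]; linarith
  have hx₁gt : (⌈α₀⌉ : ℝ) - 1 < x₁ := by rw [hx₁def]; linarith
  have hcx₁ : ⌈x₁⌉ = ⌈α₀⌉ := by
    rw [Int.ceil_eq_iff]
    exact ⟨by push_cast; linarith, by push_cast; linarith⟩
  set β₀ := Δ α₀ with hβ₀def
  have hβ₀ : 1 < β₀ := (hΔ.2 α₀ h0).1.1
  set γ := Δ x₁ with hγdef
  have hγ : 1 < γ := (hΔ.2 x₁ hx₁pos).1.1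
  set γ' := min γ β₀ with hγ'def
  have hγ'1 : 1 < γ' := lt_min hγ hβ₀
  have hγ'β : γ' ≤ β₀ := min_le_right _ _
  have hγ'γ : γ' ≤ γ := min_le_left _ _
  have hγ'0 : (0:ℝ) < γ' := by linarith
  have hβ₀0 : (0:ℝ) < β₀ := by linarith
  set c : ℝ := (1 - 1/γ') * ((γ' - 1) * (β₀ - 1) / (⌈α₀⌉ : ℝ)) with hcdef
  have hc0 : 0 < c := by
    apply mul_pos
    · rw [sub_pos, div_lt_one hγ'0]; linarith
    · apply div_pos (mul_pos (by linarith) (by linarith)) (by linarith)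
  -- extract l from hθ
  rw [irrationalityBase, lt_sSup_iff] at hθ
  obtain ⟨a, ⟨l, ⟨hl1, hl0⟩, rfl⟩, hlt⟩ := hθ
  have hlβ : β₀ < l := by
    have := (ENNReal.ofReal_lt_ofReal_iff (by linarith : (0:ℝ) < l)).mp hlt
    exact this
  have hl0' : (0:ℝ) < l := by linarith
  -- frequently good q
  have hfreq : ∃ᶠ q : ℕ in atTop, l ^ q * distNearestInt (q * α₀) / q < 1 := by
    by_contra hcon
    rw [Filter.not_frequently] at hcon
    have hcon' : ∀ᶠ q : ℕ in atTop,
        (1 : EReal) ≤ ((l ^ q * distNearestInt (q * α₀) / q : ℝ) : EReal) := by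
      filter_upwards [hcon] with q hq
      push_neg at hq
      exact_mod_cast hq
    have := le_liminf_of_le (u := fun q : ℕ =>
      ((l ^ q * distNearestInt (q * α₀) / q : ℝ) : EReal)) (f := atTop) (by isBoundedDefault) hcon'
    rw [hl0] at this
    exact absurd this (not_le.mpr (by norm_num : (0:EReal) < 1))
  -- derivative setup
  have hD := hdiff.hasDerivAt
  set D := deriv Δ α₀ with hDdef
  have hslope := hasDerivAt_iff_tendsto_slope.mp hD
  have hball : {x : ℝ | |slope Δ α₀ x - D| < 1} ∈ 𝓝[≠] α₀ := by
    have : Metric.ball D 1 ∈ 𝓝 D := Metric.ball_mem_nhds D one_pos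
    have h2 := hslope this
    filter_upwards [h2] with y hy
    rw [Set.mem_preimage, Metric.mem_ball, Real.dist_eq] at hy
    exact hy
  rw [Metric.mem_nhdsWithin_iff] at hball
  obtain ⟨δ, hδ0, hδ⟩ := hball
  -- eventual conditions
  set M : ℝ := min δ (min (α₀ - x₁) ((⌈α₀⌉ : ℝ) - α₀)) with hMdef
  have hM0 : 0 < M := by
    apply lt_min hδ0
    exact lt_min (by linarith) (by linarith)
  have hev : ∀ᶠ q : ℕ in atTop,
      1 ≤ q ∧ 2 * (1/l)^q < M ∧ |D| + 1 < c/2 * (l/β₀)^q := by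
    have e1 : ∀ᶠ q : ℕ in atTop, 1 ≤ q := eventually_ge_atTop 1
    have e2 : Tendsto (fun q : ℕ => 2 * (1/l)^q) atTop (nhds 0) := by
      have h1 : Tendsto (fun q : ℕ => (1/l)^q) atTop (nhds 0) := by
        apply tendsto_pow_atTop_nhds_zero_of_lt_one (by positivity)
        rw [div_lt_one hl0']; linarith
      simpa using h1.const_mul 2
    have e2' := e2.eventually_lt_const hM0
    have e3 : Tendsto (fun q : ℕ => c/2 * (l/β₀)^q) atTop atTop := by
      apply Tendsto.const_mul_atTop (by linarith : (0:ℝ) < c/2)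
      apply tendsto_pow_atTop_atTop_of_one_lt
      rw [lt_div_iff₀ hβ₀0]; linarith
    have e3' := e3.eventually_gt_atTop (|D| + 1)
    filter_upwards [e1, e2', e3'] with q h1 h2 h3
    exact ⟨h1, h2, h3⟩
  obtain ⟨q, hq1, hqge1, hqsmall, hqbig⟩ := (hfreq.and_eventually hev).exists
  -- construct the point x
  have hqR : (0:ℝ) < (q:ℝ) := by exact_mod_cast hqge1
  set d : ℝ := distNearestInt ((q:ℝ) * α₀) with hddef
  have hirrq : Irrational ((q:ℝ) * α₀) := by
    have := hirr.natCast_mul (m := q) (by omega)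
    exact this
  set p : ℤ := round ((q:ℝ) * α₀) with hpdef
  have hd0 : 0 < d := by
    rw [hddef, distNearestInt]
    rw [abs_pos, sub_ne_zero]
    exact hirrq.ne_int p
  have hlq0 : (0:ℝ) < l ^ q := by positivity
  have hq1' : l ^ q * d < q := by rwa [div_lt_one hqR] at hq1
  set r : ℝ := (p:ℝ) / q with hrdef
  have hrq : r * q = (p:ℝ) := by
    rw [hrdef]; field_simp
  have hrd : α₀ - r = ((q:ℝ) * α₀ - p) / q := by
    rw [hrdef]; field_simp
  have habs : |α₀ - r| = d / q := by
    rw [hrd, abs_div, abs_of_pos hqR, hddef, distNearestInt, hpdef]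
  have hsmall : |α₀ - r| < (1/l)^q := by
    rw [habs, one_div_pow, div_lt_div_iff₀ hqR hlq0]
    linarith [hq1']
  set x : ℝ := 2 * r - α₀ with hxdef
  have hxd : x - α₀ = 2 * (r - α₀) := by rw [hxdef]; ring
  have hxabs : |x - α₀| = 2 * |α₀ - r| := by
    rw [hxd, abs_mul, abs_sub_comm]
    norm_num
  have hxsmall : |x - α₀| < 2 * (1/l)^q := by
    rw [hxabs]; linarith
  have hxM : |x - α₀| < M := by linarith
  have hxδ : |x - α₀| < δ := lt_of_lt_of_le hxM (min_le_left _ _)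
  have hxx₁ : x₁ < x := by
    have h1 : |x - α₀| < α₀ - x₁ :=
      lt_of_lt_of_le hxM (le_trans (min_le_right _ _) (min_le_left _ _))
    have := abs_lt.mp h1
    linarith [this.1]
  have hxb : x < (⌈α₀⌉ : ℝ) := by
    have h1 : |x - α₀| < (⌈α₀⌉ : ℝ) - α₀ :=
      lt_of_lt_of_le hxM (le_trans (min_le_right _ _) (min_le_right _ _))
    have := abs_lt.mp h1
    linarith [this.2]
  have hx0 : 0 < x := by linarith
  have hcx : ⌈x⌉ = ⌈α₀⌉ := by
    rw [Int.ceil_eq_iff]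
    exact ⟨by push_cast; linarith, by push_cast; linarith⟩
  have hB0R : (0:ℝ) < (⌈α₀⌉ : ℝ) := by linarith
  have hrne : r ≠ α₀ := by
    intro h
    rw [h] at habs
    simp at habs
    have : 0 < d / q := div_pos hd0 hqR
    linarith
  have hxne : x ≠ α₀ := by
    intro h
    rw [hxdef] at h
    apply hrne
    linarith
  -- the key lower bound on |Δ x - Δ α₀|
  have hgap : c * (1/β₀)^q ≤ |Δ x - Δ α₀| := by
    rcases lt_or_gt_of_ne hrne with hcase | hcase
    · -- r < α₀, x < α₀
      have hxα : x < α₀ := by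
        have : r - α₀ < 0 := by linarith
        linarith [hxd, this]
      have hpq : (p:ℝ) < α₀ * q := by
        have := mul_lt_mul_of_pos_right hcase hqR
        rw [hrq] at this
        linarith
      have hm1 : x * q < (p:ℝ) := by
        have : x * q = 2 * (r * q) - α₀ * q := by rw [hxdef]; ring
        rw [this, hrq]
        linarith
      obtain ⟨hlt', hgap'⟩ := keyA Δ hΔ x α₀ hx0 hxα (hcx) q hqge1 p
        (by exact_mod_cast hm1) (by exact_mod_cast hpq)
      have hγx : γ ≤ Δ x := keyB Δ hΔ x₁ x hx₁pos hxx₁.le (hcx₁.trans hcx.symm)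
      have hΔx1 : 1 < Δ x := by linarith
      have hΔx0 : 0 < Δ x := by linarith
      have hstep : c * (1/β₀)^q
          ≤ (1 - 1/Δ x) * (1/Δ x)^q * ((Δ x - 1) * (β₀ - 1) / (⌈α₀⌉ : ℝ)) := by
        have hq1' : c * (1/β₀)^q
            = (1 - 1/γ') * (1/β₀)^q * ((γ' - 1) * (β₀ - 1) / (⌈α₀⌉ : ℝ)) := by
          rw [hcdef]; ring
        rw [hq1']
        have hgx : γ' ≤ Δ x := le_trans hγ'γ hγx
        have hA : 1 - 1/γ' ≤ 1 - 1/Δ x := by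
          have := one_div_le_one_div_of_le hγ'0 hgx
          linarith
        have hA0 : (0:ℝ) ≤ 1 - 1/γ' := by
          rw [sub_nonneg, div_le_one hγ'0]; linarith
        have hA0' : (0:ℝ) ≤ 1 - 1/Δ x := by
          rw [sub_nonneg, div_le_one hΔx0]; linarith
        have hP : (1/β₀)^q ≤ (1/Δ x)^q := by
          apply pow_le_pow_left₀ (by positivity)
          exact one_div_le_one_div_of_le hΔx0 hlt'.le
        have hP0 : (0:ℝ) ≤ (1/β₀)^q := by positivity
        have hC : (γ' - 1) * (β₀ - 1) / (⌈α₀⌉ : ℝ) ≤ (Δ x - 1) * (β₀ - 1) / (⌈α₀⌉ : ℝ) := by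
          apply (div_le_div_iff_of_pos_right hB0R).mpr
          exact mul_le_mul_of_nonneg_right (by linarith) (by linarith)
        have hC0 : (0:ℝ) ≤ (γ' - 1) * (β₀ - 1) / (⌈α₀⌉ : ℝ) := by
          apply div_nonneg _ hB0R.le
          exact mul_nonneg (by linarith) (by linarith)
        exact mul_le_mul (mul_le_mul hA hP hP0 hA0') hC hC0
          (mul_nonneg hA0' (by positivity))
      rw [hcx] at hgap'
      have : |Δ x - Δ α₀| = Δ α₀ - Δ x := by
        rw [abs_sub_comm, abs_of_pos (by linarith)]
      rw [this]
      calc c * (1/β₀)^q ≤ (1 - 1/Δ x) * (1/Δ x)^q * ((Δ x - 1) * (β₀ - 1) / (⌈α₀⌉ : ℝ)) := hstep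
        _ ≤ Δ α₀ - Δ x := hgap'
    · -- α₀ < r, α₀ < x
      have hxα : α₀ < x := by
        have : 0 < r - α₀ := by linarith
        linarith [hxd, this]
      have hpq : α₀ * q < (p:ℝ) := by
        have := mul_lt_mul_of_pos_right hcase hqR
        rw [hrq] at this
        linarith
      have hm2 : (p:ℝ) < x * q := by
        have : x * q = 2 * (r * q) - α₀ * q := by rw [hxdef]; ring
        rw [this, hrq]
        linarith
      obtain ⟨hlt', hgap'⟩ := keyA Δ hΔ α₀ x h0 hxα hcx.symm q hqge1 p
        (by exact_mod_cast hpq) (by exact_mod_cast hm2)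
      have hstep : c * (1/β₀)^q
          ≤ (1 - 1/β₀) * (1/β₀)^q * ((β₀ - 1) * (Δ x - 1) / (⌈α₀⌉ : ℝ)) := by
        have hq1' : c * (1/β₀)^q
            = (1 - 1/γ') * (1/β₀)^q * ((γ' - 1) * (β₀ - 1) / (⌈α₀⌉ : ℝ)) := by
          rw [hcdef]; ring
        rw [hq1']
        have hA : 1 - 1/γ' ≤ 1 - 1/β₀ := by
          have := one_div_le_one_div_of_le hγ'0 hγ'β
          linarith
        have hA0 : (0:ℝ) ≤ 1 - 1/γ' := by
          rw [sub_nonneg, div_le_one hγ'0]; linarith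
        have hA0' : (0:ℝ) ≤ 1 - 1/β₀ := by
          rw [sub_nonneg, div_le_one hβ₀0]; linarith
        have hP0 : (0:ℝ) ≤ (1/β₀)^q := by positivity
        have hC : (γ' - 1) * (β₀ - 1) / (⌈α₀⌉ : ℝ) ≤ (β₀ - 1) * (Δ x - 1) / (⌈α₀⌉ : ℝ) := by
          apply (div_le_div_iff_of_pos_right hB0R).mpr
          have h1 : (γ' - 1) * (β₀ - 1) = (β₀ - 1) * (γ' - 1) := by ring
          rw [h1]
          exact mul_le_mul_of_nonneg_left (by linarith) (by linarith)
        have hC0 : (0:ℝ) ≤ (γ' - 1) * (β₀ - 1) / (⌈α₀⌉ : ℝ) := by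
          apply div_nonneg _ hB0R.le
          exact mul_nonneg (by linarith) (by linarith)
        exact mul_le_mul (mul_le_mul hA (le_refl _) hP0 hA0') hC hC0
          (mul_nonneg hA0' (by positivity))
      have : |Δ x - Δ α₀| = Δ x - Δ α₀ := abs_of_pos (by linarith)
      rw [this]
      calc c * (1/β₀)^q ≤ (1 - 1/β₀) * (1/β₀)^q * ((β₀ - 1) * (Δ x - 1) / (⌈α₀⌉ : ℝ)) := hstep
        _ ≤ Δ x - Δ α₀ := hgap'
  -- contradiction with the slope bound
  have hxmem : x ∈ Metric.ball α₀ δ ∩ ({α₀}ᶜ : Set ℝ) := by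
    constructor
    · rw [Metric.mem_ball, Real.dist_eq]; exact hxδ
    · simp [hxne]
  have hsl := hδ hxmem
  rw [Set.mem_setOf_eq] at hsl
  have hslope_bd : |slope Δ α₀ x| < |D| + 1 := by
    have := abs_sub_abs_le_abs_sub (slope Δ α₀ x) D
    linarith [abs_nonneg D]
  have hslope_eq : |slope Δ α₀ x| = |Δ x - Δ α₀| / |x - α₀| := by
    rw [slope_def_field, abs_div]
  have habs0 : 0 < |x - α₀| := abs_pos.mpr (sub_ne_zero.mpr hxne)
  have hquot : c/2 * (l/β₀)^q ≤ |slope Δ α₀ x| := by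
    rw [hslope_eq]
    have hid : c/2 * (l/β₀)^q = (c * (1/β₀)^q) / (2 * (1/l)^q) := by
      rw [div_pow, one_div_pow, one_div_pow]
      have hβq : (0:ℝ) < β₀ ^ q := by positivity
      field_simp
    rw [hid]
    apply div_le_div₀ (abs_nonneg _) hgap habs0 hxsmall.le
  linarith
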